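/- arXiv:1504.03135 — 2 statements merged into one kernel-verified Lean document; each statement's English description precedes it below -/
import Mathlib

section
/- Fix β ∈ (0,1) and K > 0, and set u_T² = 2 ln T + (2/α + m - 2) ln ln T + O(1) for constants α ∈ (0,2], m ≥ 1. Then T² · u_T^{4/α + 2m - 2} · (ln T)^{-1} · exp(-u_T² / (1 + K/ln(T^β))) is bounded as T → ∞. -/
open Filter Real

set_option maxHeartbeats 1000000

/-- With `u_T² = 2 ln T + (2/α + m - 2) ln ln T + O(1)`, `β ∈ (0,1)` and `K > 0`, the quantity
`T² · u_T^{4/α + 2m - 2} · (ln T)⁻¹ · exp(-u_T² / (1 + K / ln (T^β)))` stays bounded as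
`T → ∞`. -/
theorem bounded_comparison_factor (α m β K : ℝ) (hα : 0 < α) (hα2 : α ≤ 2) (hm : 1 ≤ m)
    (hβ0 : 0 < β) (hβ1 : β < 1) (hK : 0 < K) (u : ℝ → ℝ)
    (hu : ∃ C : ℝ, ∀ᶠ T in atTop,
      |u T ^ 2 - (2 * Real.log T + (2/α + m - 2) * Real.log (Real.log T))| ≤ C) :
    ∃ M : ℝ, ∀ᶠ T in atTop,
      |T ^ 2 * u T ^ (4/α + 2*m - 2) * (Real.log T)⁻¹ *
        Real.exp (-(u T ^ 2) / (1 + K / Real.log (T ^ β)))| ≤ M := by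
  obtain ⟨C, hC⟩ := hu
  set c : ℝ := 2/α + m - 2 with hc_def
  set q : ℝ := 2/α + m - 1 with hq_def
  clear_value c q
  have h2α : 1 ≤ 2/α := (one_le_div hα).2 hα2
  have hc : 0 ≤ c := by rw [hc_def]; linarith
  have hq : 1 ≤ q := by rw [hq_def]; linarith
  refine ⟨Real.exp (q * Real.log 3 + |C| + 3*K/β), ?_⟩
  have hE3 : ∀ᶠ x : ℝ in atTop, c * Real.log x + |C| ≤ x := by
    have h := (Real.isLittleO_log_id_atTop.const_mul_left c).def
      (by norm_num : (0:ℝ) < 1/2)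
    filter_upwards [h, eventually_ge_atTop (2*|C|), eventually_ge_atTop 0] with x hx hx2 hx0
    have hcx : c * Real.log x ≤ 1/2 * x := by
      have h' : |c * Real.log x| ≤ 1/2 * |x| := hx
      have h'' := le_trans (le_abs_self (c * Real.log x)) h'
      rwa [abs_of_nonneg hx0] at h''
    linarith
  filter_upwards [hC, Real.tendsto_log_atTop.eventually (eventually_ge_atTop 1),
    Real.tendsto_log_atTop.eventually hE3, eventually_gt_atTop 0] with T hCT hL1 hE3T hT0
  set L := Real.log T with hL
  set lL := Real.log L with hlL
  have hL0 : (0:ℝ) < L := lt_of_lt_of_le one_pos hL1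
  have hlL0 : 0 ≤ lL := Real.log_nonneg hL1
  have hclL : 0 ≤ c * lL := mul_nonneg hc hlL0
  have habs := abs_le.1 hCT
  have hCabs : C ≤ |C| := le_abs_self C
  have hu2lb : 2*L + c*lL - |C| ≤ u T ^ 2 := by
    have h1 := habs.1
    linarith
  have hu2ub : u T ^ 2 ≤ 3 * L := by
    have h2 := habs.2
    linarith
  have hA'L : L ≤ 2*L + c*lL - |C| := by linarith
  have hu2pos : (0:ℝ) < u T ^ 2 := lt_of_lt_of_le (lt_of_lt_of_le hL0 hA'L) hu2lb
  have hβL : (0:ℝ) < β * L := mul_pos hβ0 hL0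
  have hβLK : (0:ℝ) < β * L + K := by linarith
  have hlogTβ : Real.log (T ^ β) = β * L := Real.log_rpow hT0 β
  -- rewrite the denominator
  have hDen : 1 + K / Real.log (T ^ β) = (β*L + K) / (β*L) := by
    rw [hlogTβ]; field_simp
  -- the division lower bound
  have hDiv : 2*L + c*lL - |C| - 3*K/β ≤ u T ^ 2 / ((β*L + K)/(β*L)) := by
    have hrw : u T ^ 2 / ((β*L + K)/(β*L)) = u T ^ 2 * (β*L) / (β*L + K) := by
      field_simp
    rw [hrw]
    have hstep1 : (2*L + c*lL - |C|) * (β*L) / (β*L + K) ≤ u T ^ 2 * (β*L) / (β*L + K) := by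
      have h0 : (0:ℝ) ≤ β*L := hβL.le
      gcongr
    have hstep2 : 2*L + c*lL - |C| - 3*K/β ≤ (2*L + c*lL - |C|) * (β*L) / (β*L + K) := by
      have hid : (2*L + c*lL - |C|) * (β*L) / (β*L + K)
          = (2*L + c*lL - |C|) - (2*L + c*lL - |C|) * K / (β*L + K) := by
        field_simp; ring
      rw [hid]
      have hA'3L : 2*L + c*lL - |C| ≤ 3*L := le_trans hu2lb hu2ub
      have h1 : (2*L + c*lL - |C|) * K / (β*L + K) ≤ 3*L*K / (β*L) := by
        apply div_le_div₀ (by positivity) _ hβL (by linarith)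
        have : 0 ≤ K := hK.le
        nlinarith
      have h2 : 3*L*K/(β*L) = 3*K/β := by
        field_simp
      linarith
    linarith
  -- log bound
  have hlogu2 : Real.log (u T ^ 2) ≤ Real.log 3 + lL := by
    calc Real.log (u T ^ 2) ≤ Real.log (3*L) := by
          apply Real.log_le_log hu2pos hu2ub
      _ = Real.log 3 + lL := by rw [Real.log_mul (by norm_num) hL0.ne']
  -- rewrite everything into exponentials
  have hT2 : (T:ℝ)^2 = Real.exp (2*L) := by
    rw [two_mul, Real.exp_add, hL, Real.exp_log hT0]; ring
  have hLinv : L⁻¹ = Real.exp (-lL) := by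
    rw [hlL, Real.exp_neg, Real.exp_log hL0]
  have hp : (4/α + 2*m - 2) = 2 * q := by rw [hq_def]; ring
  have habsp : |u T ^ (4/α + 2*m - 2)| ≤ (u T ^ 2 : ℝ) ^ q := by
    calc |u T ^ (4/α + 2*m - 2)| ≤ |u T| ^ (4/α + 2*m - 2) :=
          Real.abs_rpow_le_abs_rpow _ _
      _ = (u T ^ 2 : ℝ) ^ q := by
          rw [hp, Real.rpow_mul (abs_nonneg _), Real.rpow_two, sq_abs]
  have hu2q : (u T ^ 2 : ℝ) ^ q = Real.exp (Real.log (u T ^ 2) * q) :=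
    Real.rpow_def_of_pos hu2pos q
  calc |T ^ 2 * u T ^ (4/α + 2*m - 2) * L⁻¹ *
        Real.exp (-(u T ^ 2) / (1 + K / Real.log (T ^ β)))|
      = T^2 * |u T ^ (4/α + 2*m - 2)| * L⁻¹ *
        Real.exp (-(u T ^ 2) / (1 + K / Real.log (T ^ β))) := by
        rw [abs_mul, abs_mul, abs_mul, abs_of_nonneg (by positivity : (0:ℝ) ≤ T^2),
          abs_of_nonneg (by positivity : (0:ℝ) ≤ L⁻¹), abs_of_nonneg (Real.exp_nonneg _)]
    _ ≤ T^2 * ((u T ^ 2:ℝ) ^ q) * L⁻¹ *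
        Real.exp (-(u T ^ 2) / (1 + K / Real.log (T ^ β))) := by
        gcongr
    _ = Real.exp (2*L + Real.log (u T ^ 2) * q + (-lL) +
          (-(u T ^ 2) / ((β*L + K)/(β*L)))) := by
        rw [hDen, hT2, hu2q, hLinv, ← Real.exp_add, ← Real.exp_add, ← Real.exp_add]
    _ ≤ Real.exp (q * Real.log 3 + |C| + 3*K/β) := by
        rw [Real.exp_le_exp]
        have hq0 : (0:ℝ) ≤ q := by linarith
        have h1 : Real.log (u T ^ 2) * q ≤ (Real.log 3 + lL) * q := by
          apply mul_le_mul_of_nonneg_right hlogu2 hq0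
        have h2 : -(u T ^ 2) / ((β*L + K)/(β*L)) = -(u T ^ 2 / ((β*L + K)/(β*L))) := by
          ring
        rw [h2]
        have hqc : q = c + 1 := by rw [hq_def, hc_def]; ring
        nlinarith [hDiv, h1, hlL0]
end

section
/- Let X and Y be jointly standard Gaussian random variables with correlation ρ ∈ [0,1). Then P(X > u, Y > u) ≤ Φ̄(u) · Φ̄(u √((1-ρ)/(1+ρ))) · C for some absolute constant C, where Φ̄ is the standard normal survival function. -/
open MeasureTheory ProbabilityTheory Real

/-- The standard normal survival function `Φ̄(u) = P(N(0,1) > u)`. -/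
noncomputable def stdNormalSurvival (u : ℝ) : ℝ :=
  (gaussianReal 0 1 (Set.Ioi u)).toReal

open Set

namespace BGTB

noncomputable abbrev phi (x : ℝ) : ℝ := gaussianPDFReal 0 1 x

lemma phi_formula (x : ℝ) : phi x = (Real.sqrt (2*π))⁻¹ * Real.exp (-x^2/2) := by
  simp [phi, gaussianPDFReal]

lemma phi_nonneg (x : ℝ) : 0 ≤ phi x := gaussianPDFReal_nonneg 0 1 x

lemma phi_exp_le {a b c : ℝ} (h : b^2 ≤ a^2 + 2*c) : phi a ≤ Real.exp c * phi b := by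
  rw [phi_formula, phi_formula, mul_comm (Real.exp c), mul_assoc, ← Real.exp_add]
  have h2 : Real.exp (-a^2/2) ≤ Real.exp (-b^2/2 + c) := by
    apply Real.exp_le_exp.2; linarith
  exact mul_le_mul_of_nonneg_left h2 (by positivity)

lemma surv_eq (x : ℝ) : stdNormalSurvival x = ∫ t in Ioi x, phi t := by
  rw [stdNormalSurvival, gaussianReal_apply_eq_integral 0 one_ne_zero,
    ENNReal.toReal_ofReal]
  exact setIntegral_nonneg measurableSet_Ioi (fun t _ => phi_nonneg t)

lemma surv_nonneg (x : ℝ) : 0 ≤ stdNormalSurvival x := ENNReal.toReal_nonneg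

lemma measure_Ioi_eq (x : ℝ) :
    gaussianReal 0 1 (Ioi x) = ENNReal.ofReal (stdNormalSurvival x) :=
  (ENNReal.ofReal_toReal (measure_ne_top _ _)).symm

lemma surv_antitone {x y : ℝ} (h : x ≤ y) : stdNormalSurvival y ≤ stdNormalSurvival x :=
  ENNReal.toReal_mono (measure_ne_top _ _) (measure_mono (Ioi_subset_Ioi h))

lemma mills_upper {v : ℝ} (hv : 0 < v) : stdNormalSurvival v ≤ phi v / v := by
  rw [surv_eq]
  have hInt : IntegrableOn
      (fun x : ℝ => (Real.sqrt (2*π))⁻¹ * Real.exp (v^2/2) * Real.exp (-v * x)) (Ioi v) :=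
    (exp_neg_integrableOn_Ioi v hv).const_mul _
  have h1 : (∫ t in Ioi v, phi t)
      ≤ ∫ t in Ioi v, (Real.sqrt (2*π))⁻¹ * Real.exp (v^2/2) * Real.exp (-v * t) := by
    apply setIntegral_mono_on ((integrable_gaussianPDFReal 0 1).integrableOn) hInt
      measurableSet_Ioi
    intro x _
    show phi x ≤ _
    rw [phi_formula, mul_assoc, ← Real.exp_add]
    apply mul_le_mul_of_nonneg_left _ (by positivity)
    apply Real.exp_le_exp.2
    nlinarith [sq_nonneg (x - v)]
  have h2 : (∫ t in Ioi v, Real.exp (-v * t)) = v⁻¹ * Real.exp (-(v*v)) := by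
    have := integral_comp_mul_left_Ioi (fun y => Real.exp (-y)) v hv
    simp only [smul_eq_mul] at this
    calc (∫ t in Ioi v, Real.exp (-v * t)) = ∫ t in Ioi v, Real.exp (-(v * t)) := by
          simp [neg_mul]
      _ = v⁻¹ * Real.exp (-(v*v)) := by rw [this, integral_exp_neg_Ioi]
  rw [integral_const_mul, h2] at h1
  calc (∫ t in Ioi v, phi t) ≤ _ := h1
    _ = phi v / v := by
        rw [phi_formula]
        rw [show (√(2 * π))⁻¹ * rexp (v ^ 2 / 2) * (v⁻¹ * rexp (-(v * v)))
            = (√(2 * π))⁻¹ * v⁻¹ * (rexp (v ^ 2 / 2) * rexp (-(v * v))) from by ring,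
          ← Real.exp_add]
        rw [show v^2/2 + -(v*v) = -v^2/2 from by ring]
        ring

lemma mills_lower {a : ℝ} (ha : 1 ≤ a) : phi a / a ≤ Real.exp 2 * stdNormalSurvival a := by
  rw [surv_eq]
  have ha0 : 0 < a := lt_of_lt_of_le one_pos ha
  have hsub : Ioc a (a + 1/a) ⊆ Ioi a := Ioc_subset_Ioi_self
  have hIip : IntegrableOn phi (Ioi a) := (integrable_gaussianPDFReal 0 1).integrableOn
  have h1 : (∫ t in Ioc a (a + 1/a), phi t) ≤ ∫ t in Ioi a, phi t := by
    apply setIntegral_mono_set hIip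
    · exact Filter.Eventually.of_forall (fun t => phi_nonneg t)
    · exact HasSubset.Subset.eventuallyLE hsub
  have h2 : (1/a) * phi (a + 1/a) ≤ ∫ t in Ioc a (a + 1/a), phi t := by
    have hc : (∫ _ in Ioc a (a + 1/a), phi (a + 1/a)) ≤ ∫ t in Ioc a (a + 1/a), phi t := by
      apply setIntegral_mono_on (integrableOn_const (by
        rw [Real.volume_Ioc]; exact ENNReal.ofReal_ne_top))
        (hIip.mono_set hsub) measurableSet_Ioc
      intro x hx
      have := phi_exp_le (a := a + 1/a) (b := x) (c := 0) (by
        have hx1 : a < x := hx.1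
        have hx2 : x ≤ a + 1/a := hx.2
        nlinarith)
      rwa [Real.exp_zero, one_mul] at this
    rw [setIntegral_const, measureReal_def, Real.volume_Ioc, show a + 1/a - a = 1/a from by ring,
      ENNReal.toReal_ofReal (by positivity), smul_eq_mul] at hc
    exact hc
  have h3 : phi a ≤ Real.exp 2 * phi (a + 1/a) := by
    apply phi_exp_le
    have h4 : 1/a ≤ 1 := by rw [div_le_one ha0]; exact ha
    have h5 : 0 < 1/a := by positivity
    have h6 : a * (1/a) = 1 := by field_simp
    nlinarith [mul_le_one₀ h4 (le_of_lt h5) h4]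
  calc phi a / a ≤ (Real.exp 2 * phi (a + 1/a)) / a := by
        exact (div_le_div_iff_of_pos_right ha0).2 h3
      _ = Real.exp 2 * ((1/a) * phi (a + 1/a)) := by ring
      _ ≤ Real.exp 2 * ∫ t in Ioi a, phi t := by
        apply mul_le_mul_of_nonneg_left (le_trans h2 h1) (Real.exp_nonneg 2)

lemma interval_bound (l β : ℝ) (hβ : 0 ≤ β) :
    gaussianReal 0 1 (Ioc l (l+β)) ≤ ENNReal.ofReal (β * phi (max l 0)) := by
  rw [gaussianReal_apply 0 one_ne_zero]
  calc (∫⁻ x in Ioc l (l+β), gaussianPDF 0 1 x)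
      ≤ ∫⁻ _ in Ioc l (l+β), ENNReal.ofReal (phi (max l 0)) := by
        apply setLIntegral_mono' measurableSet_Ioc
        intro x hx
        apply ENNReal.ofReal_le_ofReal
        have hsq : (max l 0)^2 ≤ x^2 + 2*0 := by
          rcases le_or_gt 0 l with h0 | h0
          · rw [max_eq_left h0]; nlinarith [hx.1]
          · rw [max_eq_right h0.le]; nlinarith
        have := phi_exp_le hsq
        rwa [Real.exp_zero, one_mul] at this
    _ = ENNReal.ofReal (phi (max l 0)) * volume (Ioc l (l+β)) := setLIntegral_const _ _
    _ = ENNReal.ofReal (β * phi (max l 0)) := by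
        rw [Real.volume_Ioc, show l + β - l = β from by ring,
          ← ENNReal.ofReal_mul (phi_nonneg _), mul_comm]

lemma surv_shift {u s : ℝ} (hu : 1 ≤ u) (hs : 0 ≤ s) :
    stdNormalSurvival (u + s) ≤ Real.exp 2 * Real.exp (-(u*s)) * stdNormalSurvival u := by
  have hu0 : 0 < u := lt_of_lt_of_le one_pos hu
  have h1 : stdNormalSurvival (u + s) ≤ phi (u+s) / (u+s) := mills_upper (by linarith)
  have h2 : phi (u+s) ≤ Real.exp (-(u*s)) * phi u :=
    phi_exp_le (by nlinarith [sq_nonneg s])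
  have h3 : phi (u+s) / (u+s) ≤ (Real.exp (-(u*s)) * phi u) / u :=
    div_le_div₀ (mul_nonneg (Real.exp_nonneg _) (phi_nonneg u)) h2 hu0 (by linarith)
  have h4 : (Real.exp (-(u*s)) * phi u) / u
      ≤ Real.exp (-(u*s)) * (Real.exp 2 * stdNormalSurvival u) := by
    rw [mul_div_assoc]
    exact mul_le_mul_of_nonneg_left (mills_lower hu) (Real.exp_nonneg _)
  calc stdNormalSurvival (u + s) ≤ _ := h1
    _ ≤ _ := h3
    _ ≤ _ := h4
    _ = Real.exp 2 * Real.exp (-(u*s)) * stdNormalSurvival u := by ring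

lemma surv_one : Real.exp (-4) ≤ stdNormalSurvival 1 := by
  have hpi : 2*π ≤ (Real.exp 1)^2 := by
    nlinarith [Real.pi_lt_d6.le, Real.exp_one_gt_d9]
  have hsqrt : Real.sqrt (2*π) ≤ Real.exp 1 := by
    calc Real.sqrt (2*π) ≤ Real.sqrt ((Real.exp 1)^2) := Real.sqrt_le_sqrt hpi
      _ = Real.exp 1 := Real.sqrt_sq (Real.exp_nonneg 1)
  have hphi : Real.exp (-2) ≤ phi 1 := by
    rw [phi_formula]
    have h1 : (Real.exp 1)⁻¹ ≤ (Real.sqrt (2*π))⁻¹ := by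
      apply inv_anti₀ (Real.sqrt_pos.2 (by positivity)) hsqrt
    calc Real.exp (-2) ≤ Real.exp (-1) * Real.exp (-(1:ℝ)^2/2) := by
          rw [← Real.exp_add]; apply Real.exp_le_exp.2; norm_num
      _ ≤ (Real.sqrt (2*π))⁻¹ * Real.exp (-(1:ℝ)^2/2) := by
          apply mul_le_mul_of_nonneg_right _ (Real.exp_nonneg _)
          rw [Real.exp_neg]; exact h1
  have hml := mills_lower (le_refl 1)
  rw [div_one] at hml
  have hthis : Real.exp (-2) * phi 1 ≤ Real.exp (-2) * (Real.exp 2 * stdNormalSurvival 1) :=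
    mul_le_mul_of_nonneg_left hml (Real.exp_nonneg _)
  rw [← mul_assoc, ← Real.exp_add] at hthis
  norm_num at hthis
  calc Real.exp (-4) = Real.exp (-2) * Real.exp (-2) := by
        rw [← Real.exp_add]; norm_num
    _ ≤ Real.exp (-2) * phi 1 := mul_le_mul_of_nonneg_left hphi (Real.exp_nonneg _)
    _ ≤ stdNormalSurvival 1 := hthis

end BGTB

open BGTB

set_option maxHeartbeats 2000000 in
/-- Bivariate Gaussian tail bound: if `(X, Y)` are jointly standard Gaussian with correlation
`ρ ∈ [0,1)` (represented as `X = Z₁`, `Y = ρ Z₁ + √(1-ρ²) Z₂` with `Z₁, Z₂` independent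
standard Gaussians), then `P(X > u, Y > u) ≤ C Φ̄(u) Φ̄(u √((1-ρ)/(1+ρ)))` for some absolute
constant `C`. -/
theorem bivariate_gaussian_tail_bound :
    ∃ C : ℝ, 0 < C ∧
      ∀ (Ω : Type) (_ : MeasurableSpace Ω) (μ : Measure Ω), IsProbabilityMeasure μ →
        ∀ (Z₁ Z₂ : Ω → ℝ) (ρ : ℝ), 0 ≤ ρ → ρ < 1 →
          IndepFun Z₁ Z₂ μ →
          μ.map Z₁ = gaussianReal 0 1 → μ.map Z₂ = gaussianReal 0 1 →
          ∀ u : ℝ,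
            (μ {ω | u < Z₁ ω ∧ u < ρ * Z₁ ω + Real.sqrt (1 - ρ^2) * Z₂ ω}).toReal ≤
              C * stdNormalSurvival u *
                stdNormalSurvival (u * Real.sqrt ((1 - ρ) / (1 + ρ))) := by
  refine ⟨Real.exp 9, Real.exp_pos 9, ?_⟩
  intro Ω mΩ μ hprob Z₁ Z₂ ρ hρ0 hρ1 hindep hmap₁ hmap₂ u
  have hSdef : ∀ x : ℝ, ((gaussianReal 0 1) (Ioi x)).toReal = stdNormalSurvival x :=
    fun _ => rfl
  have haem₁ : AEMeasurable Z₁ μ := by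
    by_contra h
    rw [Measure.map_of_not_aemeasurable h] at hmap₁
    exact (IsProbabilityMeasure.ne_zero (gaussianReal 0 1)) hmap₁.symm
  have haem₂ : AEMeasurable Z₂ μ := by
    by_contra h
    rw [Measure.map_of_not_aemeasurable h] at hmap₂
    exact (IsProbabilityMeasure.ne_zero (gaussianReal 0 1)) hmap₂.symm
  have hpre₁ : ∀ {s : Set ℝ}, MeasurableSet s → μ (Z₁ ⁻¹' s) = gaussianReal 0 1 s := by
    intro s hs; rw [← hmap₁, Measure.map_apply_of_aemeasurable haem₁ hs]
  have hpre₂ : ∀ {s : Set ℝ}, MeasurableSet s → μ (Z₂ ⁻¹' s) = gaussianReal 0 1 s := by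
    intro s hs; rw [← hmap₂, Measure.map_apply_of_aemeasurable haem₂ hs]
  have hprod : ∀ (s t : Set ℝ), MeasurableSet s → MeasurableSet t →
      μ (Z₁ ⁻¹' s ∩ Z₂ ⁻¹' t) = gaussianReal 0 1 s * gaussianReal 0 1 t := by
    intro s t hs ht
    rw [hindep.measure_inter_preimage_eq_mul s t hs ht, hpre₁ hs, hpre₂ ht]
  set r : ℝ := Real.sqrt ((1 - ρ) / (1 + ρ)) with hr_def
  set a : ℝ := u * r with ha_def
  set q : ℝ := Real.sqrt (1 - ρ^2) with hq_def
  have h1ρ : (0:ℝ) < 1 + ρ := by linarith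
  have hr0 : 0 < r := Real.sqrt_pos.2 (div_pos (by linarith) h1ρ)
  rcases le_or_gt a 1 with hcase | hcase
  · -- trivial case : a ≤ 1
    have hEsub : {ω | u < Z₁ ω ∧ u < ρ * Z₁ ω + q * Z₂ ω} ⊆ Z₁ ⁻¹' (Ioi u) :=
      fun ω hω => hω.1
    have h1 : (μ {ω | u < Z₁ ω ∧ u < ρ * Z₁ ω + q * Z₂ ω}).toReal ≤ stdNormalSurvival u := by
      have := ENNReal.toReal_mono (measure_ne_top μ _) (measure_mono hEsub)
      rwa [hpre₁ measurableSet_Ioi, hSdef] at this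
    have h2 : Real.exp (-4) ≤ stdNormalSurvival a := surv_one.trans (surv_antitone hcase)
    have h3 : Real.exp 9 * Real.exp (-4) = Real.exp 5 := by
      rw [← Real.exp_add]; norm_num
    have h4 : (1:ℝ) ≤ Real.exp 5 := Real.one_le_exp (by norm_num)
    refine h1.trans ?_
    nlinarith [surv_nonneg u, surv_nonneg a, Real.exp_pos 9,
      mul_le_mul_of_nonneg_left h2 (mul_nonneg (Real.exp_pos 9).le (surv_nonneg u))]
  · -- main case : 1 < a
    have ha0 : 0 < a := lt_trans one_pos hcase
    have hu0 : 0 < u := by nlinarith [ha_def, hr0, hcase]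
    have hr1 : r ≤ 1 := Real.sqrt_le_one.mpr (by rw [div_le_one h1ρ]; linarith)
    have hu1 : 1 < u := by nlinarith [ha_def, hr0, hr1, hcase]
    rcases eq_or_lt_of_le hρ0 with hρ | hρ
    · -- ρ = 0
      subst hρ
      have hq1 : q = 1 := by rw [hq_def]; norm_num
      have hEeq : {ω | u < Z₁ ω ∧ u < 0 * Z₁ ω + q * Z₂ ω}
          = Z₁ ⁻¹' (Ioi u) ∩ Z₂ ⁻¹' (Ioi u) := by
        ext ω; simp [hq1]
      rw [hEeq, hprod _ _ measurableSet_Ioi measurableSet_Ioi, ENNReal.toReal_mul,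
        hSdef]
      have hau : a = u := by rw [ha_def, hr_def]; norm_num
      have h1 : (1:ℝ) ≤ Real.exp 9 := Real.one_le_exp (by norm_num)
      have hSa : stdNormalSurvival a = stdNormalSurvival u := by rw [hau]
      rw [hSa]
      nlinarith [surv_nonneg u, mul_nonneg (surv_nonneg u) (surv_nonneg u)]
    · -- 0 < ρ < 1
      have hq0 : 0 < q := Real.sqrt_pos.2 (by nlinarith)
      set γ : ℝ := q / ρ with hγ_def
      set β : ℝ := 1 / a with hβ_def
      have hβ0 : 0 < β := by positivity
      have haβ : a * β = 1 := by rw [hβ_def]; field_simp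
      have hγ0 : 0 < γ := div_pos hq0 hρ
      have hγρ : ρ * γ = q := by rw [hγ_def]; field_simp
      have hr2 : r^2 = (1-ρ)/(1+ρ) := Real.sq_sqrt (div_pos (by linarith) h1ρ).le
      have hqr : q * r = 1 - ρ := by
        rw [hq_def, hr_def, ← Real.sqrt_mul (by nlinarith) _]
        rw [show (1 - ρ^2) * ((1-ρ)/(1+ρ)) = (1-ρ)^2 from by field_simp; ring]
        exact Real.sqrt_sq (by linarith)
      have hq' : q = (1+ρ) * r := by
        have h3 : (1+ρ) * r^2 = 1 - ρ := by rw [hr2]; field_simp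
        have h4 : q * r = ((1+ρ)*r) * r := by rw [hqr, ← h3]; ring
        exact mul_right_cancel₀ (ne_of_gt hr0) h4
      have h2le : 2 ≤ u * γ * β := by
        have e1 : u * γ * β = q / (ρ * r) := by
          rw [hγ_def, hβ_def, ha_def]
          field_simp
        have e2 : q / (ρ * r) = (1+ρ)/ρ := by
          rw [hq', show (1+ρ)*r = r*(1+ρ) from mul_comm _ _,
            show ρ * r = r * ρ from mul_comm _ _, mul_div_mul_left _ _ (ne_of_gt hr0)]
        rw [e1, e2, le_div_iff₀ hρ]; linarith
      have hqa : q * a = (1-ρ) * u := by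
        rw [ha_def, show q * (u*r) = (q*r)*u from by ring, hqr]
      clear_value r a q γ β
      -- the inclusion
      have hsub : {ω | u < Z₁ ω ∧ u < ρ * Z₁ ω + q * Z₂ ω}
          ⊆ (Z₁ ⁻¹' (Ioi u) ∩ Z₂ ⁻¹' (Ioi a)) ∪
            ⋃ j : ℕ, (Z₁ ⁻¹' (Ioi (u + γ * j * β)) ∩
              Z₂ ⁻¹' (Ioc (a - (j+1) * β) (a - j * β))) := by
        rintro ω ⟨h1, h2⟩
        rcases lt_or_ge a (Z₂ ω) with hz | hz
        · exact Or.inl ⟨h1, hz⟩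
        · obtain ⟨j, hj1, hj2⟩ : ∃ j : ℕ, (j:ℝ) ≤ (a - Z₂ ω) * a ∧ (a - Z₂ ω) * a < j + 1 :=
            ⟨⌊(a - Z₂ ω) * a⌋₊, Nat.floor_le (mul_nonneg (by linarith) ha0.le),
              Nat.lt_floor_add_one _⟩
          have hβa : (a - Z₂ ω) * a * β = a - Z₂ ω := by rw [mul_assoc, haβ, mul_one]
          have hz2 : Z₂ ω ≤ a - (j:ℝ) * β := by
            have := mul_le_mul_of_nonneg_right hj1 hβ0.le
            rw [hβa] at this; linarith
          have hz3 : a - ((j:ℝ) + 1) * β < Z₂ ω := by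
            have := mul_lt_mul_of_pos_right hj2 hβ0
            rw [hβa] at this; nlinarith
          have hz1 : u + γ * (j:ℝ) * β < Z₁ ω := by
            have hstep : ρ * (u + γ * (j:ℝ) * β) < ρ * Z₁ ω := by
              have hq2 : q * Z₂ ω ≤ q * a - q * ((j:ℝ) * β) := by
                nlinarith [mul_le_mul_of_nonneg_left hz2 hq0.le]
              have hexp : ρ * (u + γ * (j:ℝ) * β) = ρ * u + q * ((j:ℝ) * β) := by
                rw [show ρ * (u + γ * (j:ℝ) * β) = ρ*u + (ρ*γ)*((j:ℝ)*β) from by ring, hγρ]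
              nlinarith [hqa]
            exact lt_of_mul_lt_mul_left hstep hρ0
          exact Or.inr (mem_iUnion.2 ⟨j, hz1, hz3, hz2⟩)
      -- term bounds
      set A : ℝ := Real.exp 3 * stdNormalSurvival u * β * phi a with hA_def
      have hA0 : 0 ≤ A :=
        mul_nonneg (mul_nonneg (mul_nonneg (Real.exp_nonneg 3) (surv_nonneg u)) hβ0.le)
          (phi_nonneg a)
      have hterm : ∀ j : ℕ, μ (Z₁ ⁻¹' (Ioi (u + γ * j * β)) ∩
          Z₂ ⁻¹' (Ioc (a - (j+1) * β) (a - j * β)))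
          ≤ ENNReal.ofReal (A * Real.exp (-1) ^ j) := by
        intro j
        rw [hprod _ _ measurableSet_Ioi measurableSet_Ioc]
        have bound1 : gaussianReal 0 1 (Ioi (u + γ * j * β))
            ≤ ENNReal.ofReal (Real.exp 2 * Real.exp (-(2*(j:ℝ))) * stdNormalSurvival u) := by
          rw [measure_Ioi_eq]
          apply ENNReal.ofReal_le_ofReal
          have hs0 : 0 ≤ γ * j * β := by positivity
          refine (surv_shift hu1.le hs0).trans ?_
          apply mul_le_mul_of_nonneg_right _ (surv_nonneg u)
          apply mul_le_mul_of_nonneg_left _ (Real.exp_nonneg 2)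
          apply Real.exp_le_exp.2
          have h' : u * (γ * (j:ℝ) * β) = u * γ * β * (j:ℝ) := by ring
          have := mul_le_mul_of_nonneg_right h2le (Nat.cast_nonneg j)
          linarith [this, h'.ge, h'.le]
        have bound2 : gaussianReal 0 1 (Ioc (a - ((j:ℝ)+1) * β) (a - (j:ℝ) * β))
            ≤ ENNReal.ofReal (β * (Real.exp ((j:ℝ)+1) * phi a)) := by
          have heq : a - (j:ℝ) * β = (a - ((j:ℝ)+1) * β) + β := by ring
          rw [heq]
          refine le_trans (interval_bound _ _ hβ0.le) (ENNReal.ofReal_le_ofReal ?_)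
          apply mul_le_mul_of_nonneg_left _ hβ0.le
          apply phi_exp_le
          rcases le_or_gt 0 (a - ((j:ℝ)+1) * β) with h0 | h0
          · rw [max_eq_left h0]
            have hexp : a * (((j:ℝ)+1) * β) = (j:ℝ) + 1 := by
              rw [show a * (((j:ℝ)+1) * β) = ((j:ℝ)+1) * (a*β) from by ring, haβ, mul_one]
            nlinarith [sq_nonneg (((j:ℝ)+1) * β)]
          · rw [max_eq_right h0.le]
            have h1 : a * a < a * (((j:ℝ)+1) * β) := by nlinarith
            have hexp : a * (((j:ℝ)+1) * β) = (j:ℝ) + 1 := by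
              rw [show a * (((j:ℝ)+1) * β) = ((j:ℝ)+1) * (a*β) from by ring, haβ, mul_one]
            nlinarith
        refine le_trans (mul_le_mul' bound1 bound2) ?_
        rw [← ENNReal.ofReal_mul (mul_nonneg (mul_nonneg (Real.exp_nonneg 2)
          (Real.exp_nonneg _)) (surv_nonneg u))]
        apply ENNReal.ofReal_le_ofReal
        have hexp : Real.exp 2 * Real.exp (-(2*(j:ℝ))) * Real.exp ((j:ℝ)+1)
            = Real.exp 3 * Real.exp (-1) ^ j := by
          rw [show Real.exp (-1) ^ j = Real.exp ((j:ℝ) * (-1)) from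
            (Real.exp_nat_mul (-1) j).symm, ← Real.exp_add, ← Real.exp_add, ← Real.exp_add]
          congr 1; ring
        calc Real.exp 2 * Real.exp (-(2*(j:ℝ))) * stdNormalSurvival u *
              (β * (Real.exp ((j:ℝ)+1) * phi a))
            = (Real.exp 2 * Real.exp (-(2*(j:ℝ))) * Real.exp ((j:ℝ)+1)) *
              (stdNormalSurvival u * β * phi a) := by ring
          _ = (Real.exp 3 * Real.exp (-1) ^ j) * (stdNormalSurvival u * β * phi a) := by
              rw [hexp]
          _ = A * Real.exp (-1) ^ j := by rw [hA_def]; ring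
          _ ≤ A * Real.exp (-1) ^ j := le_refl _
      have hgeo_sum : Summable (fun j : ℕ => A * Real.exp (-1) ^ j) :=
        (summable_geometric_of_lt_one (Real.exp_nonneg _)
          (Real.exp_lt_one_iff.2 (by norm_num))).mul_left A
      have hsum : (∑' j : ℕ, μ (Z₁ ⁻¹' (Ioi (u + γ * j * β)) ∩
          Z₂ ⁻¹' (Ioc (a - (j+1) * β) (a - j * β)))) ≤ ENNReal.ofReal (A * 2) := by
        refine le_trans (ENNReal.tsum_le_tsum hterm) ?_
        rw [← ENNReal.ofReal_tsum_of_nonneg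
          (fun j => mul_nonneg hA0 (pow_nonneg (Real.exp_nonneg _) j)) hgeo_sum]
        apply ENNReal.ofReal_le_ofReal
        rw [tsum_mul_left, tsum_geometric_of_lt_one (Real.exp_nonneg _)
          (Real.exp_lt_one_iff.2 (by norm_num))]
        apply mul_le_mul_of_nonneg_left _ hA0
        have h2e : Real.exp (-1) ≤ 1/2 := by
          rw [Real.exp_neg, show (1:ℝ)/2 = 2⁻¹ from by norm_num]
          exact inv_anti₀ (by norm_num) (by nlinarith [Real.exp_one_gt_d9])
        calc (1 - Real.exp (-1))⁻¹ ≤ ((1:ℝ)/2)⁻¹ := inv_anti₀ (by norm_num) (by linarith)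
          _ = 2 := by norm_num
      have hQbound : μ (Z₁ ⁻¹' (Ioi u) ∩ Z₂ ⁻¹' (Ioi a))
          ≤ ENNReal.ofReal (stdNormalSurvival u * stdNormalSurvival a) := by
        rw [hprod _ _ measurableSet_Ioi measurableSet_Ioi, measure_Ioi_eq,
          measure_Ioi_eq, ← ENNReal.ofReal_mul (surv_nonneg u)]
      have hfinal_real : stdNormalSurvival u * stdNormalSurvival a + A * 2
          ≤ Real.exp 9 * stdNormalSurvival u * stdNormalSurvival a := by
        have hml : phi a / a ≤ Real.exp 2 * stdNormalSurvival a := mills_lower hcase.le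
        have hβφ : β * phi a = phi a / a := by rw [hβ_def]; ring
        have hA2 : A * 2 ≤ 2 * Real.exp 5 * (stdNormalSurvival u * stdNormalSurvival a) := by
          rw [hA_def]
          have hrw : Real.exp 3 * stdNormalSurvival u * β * phi a
              = Real.exp 3 * stdNormalSurvival u * (phi a / a) := by rw [← hβφ]; ring
          rw [hrw]
          have h5 : Real.exp 3 * Real.exp 2 = Real.exp 5 := by rw [← Real.exp_add]; norm_num
          have step1 : Real.exp 3 * stdNormalSurvival u * (phi a / a)
              ≤ Real.exp 3 * stdNormalSurvival u * (Real.exp 2 * stdNormalSurvival a) :=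
            mul_le_mul_of_nonneg_left hml (mul_nonneg (Real.exp_nonneg 3) (surv_nonneg u))
          calc Real.exp 3 * stdNormalSurvival u * (phi a / a) * 2
              = 2 * (Real.exp 3 * stdNormalSurvival u * (phi a / a)) := by ring
            _ ≤ 2 * (Real.exp 3 * stdNormalSurvival u *
                (Real.exp 2 * stdNormalSurvival a)) := by linarith
            _ = 2 * (Real.exp 3 * Real.exp 2) *
                (stdNormalSurvival u * stdNormalSurvival a) := by ring
            _ = 2 * Real.exp 5 * (stdNormalSurvival u * stdNormalSurvival a) := by rw [h5]
        have h9 : 1 + 2 * Real.exp 5 ≤ Real.exp 9 := by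
          have h45 : Real.exp 4 * Real.exp 5 = Real.exp 9 := by rw [← Real.exp_add]; norm_num
          nlinarith [Real.add_one_le_exp (4:ℝ), Real.add_one_le_exp (5:ℝ)]
        nlinarith [mul_nonneg (surv_nonneg u) (surv_nonneg a), hA2,
          mul_le_mul_of_nonneg_right h9 (mul_nonneg (surv_nonneg u) (surv_nonneg a))]
      have hE_le : μ {ω | u < Z₁ ω ∧ u < ρ * Z₁ ω + q * Z₂ ω}
          ≤ ENNReal.ofReal (Real.exp 9 * stdNormalSurvival u * stdNormalSurvival a) := by
        calc μ {ω | u < Z₁ ω ∧ u < ρ * Z₁ ω + q * Z₂ ω}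
            ≤ μ ((Z₁ ⁻¹' (Ioi u) ∩ Z₂ ⁻¹' (Ioi a)) ∪
              ⋃ j : ℕ, (Z₁ ⁻¹' (Ioi (u + γ * j * β)) ∩
                Z₂ ⁻¹' (Ioc (a - (j+1) * β) (a - j * β)))) := measure_mono hsub
          _ ≤ μ (Z₁ ⁻¹' (Ioi u) ∩ Z₂ ⁻¹' (Ioi a)) +
              μ (⋃ j : ℕ, (Z₁ ⁻¹' (Ioi (u + γ * j * β)) ∩
                Z₂ ⁻¹' (Ioc (a - (j+1) * β) (a - j * β)))) := measure_union_le _ _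
          _ ≤ μ (Z₁ ⁻¹' (Ioi u) ∩ Z₂ ⁻¹' (Ioi a)) +
              ∑' j : ℕ, μ (Z₁ ⁻¹' (Ioi (u + γ * j * β)) ∩
                Z₂ ⁻¹' (Ioc (a - (j+1) * β) (a - j * β))) :=
              add_le_add_right (measure_iUnion_le _) _
          _ ≤ ENNReal.ofReal (stdNormalSurvival u * stdNormalSurvival a)
              + ENNReal.ofReal (A * 2) := add_le_add hQbound hsum
          _ = ENNReal.ofReal (stdNormalSurvival u * stdNormalSurvival a + A * 2) :=
              (ENNReal.ofReal_add (mul_nonneg (surv_nonneg u) (surv_nonneg a))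
                (by linarith)).symm
          _ ≤ _ := ENNReal.ofReal_le_ofReal hfinal_real
      exact ENNReal.toReal_le_of_le_ofReal
        (mul_nonneg (mul_nonneg (Real.exp_nonneg 9) (surv_nonneg u)) (surv_nonneg _)) hE_le
end
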